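/- Let (Y, y) be Shor-feasible for the data (F, w), with Shor objective value ⟨Q, Y⟩ + 2dᵀy + v. Define the symmetric (n+1)×(n+1) block matrix X := [[Y, y wᵀ − Y F, y], [w yᵀ − Fᵀ Y, Fᵀ Y F − Fᵀ y wᵀ − w yᵀ F + w wᵀ, w − Fᵀ y], [yᵀ, wᵀ − yᵀ F, 1]] (blocks of sizes k, m, 1). Then X is DNN-feasible and ⟨Ĥ, X⟩ = ⟨Q, Y⟩ + 2 dᵀ y + v. (This is one direction of the equivalence between the doubly nonnegative relaxation and the Shor relaxation of the equivalent QCQP.) -/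

import Mathlib

open Matrix

noncomputable section

/-- Frobenius (trace) inner product of real matrices. -/
def frob {ι : Type} [Fintype ι] (A B : Matrix ι ι ℝ) : ℝ := (Aᵀ * B).trace

/-- `(Y, y)` is Shor-feasible for the data `(F, w)`. -/
def ShorFeasible {k : ℕ} {ι : Type} [Fintype ι]
    (F : Matrix (Fin k) ι ℝ) (w : ι → ℝ)
    (Y : Matrix (Fin k) (Fin k) ℝ) (y : Fin k → ℝ) : Prop :=
  (∀ i, Fᵀ.mulVec y i ≤ w i) ∧
  (∀ i, 0 ≤ y i) ∧
  (∀ i j, 0 ≤ (Fᵀ * Y * F - vecMulVec w (Fᵀ.mulVec y) - vecMulVec (Fᵀ.mulVec y) w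
      + vecMulVec w w) i j) ∧
  (∀ i j, 0 ≤ Y i j) ∧
  (∀ i j, 0 ≤ (vecMulVec w y - Fᵀ * Y) i j) ∧
  (fromBlocks Y (Matrix.of fun i (_ : Unit) => y i)
    (Matrix.of fun (_ : Unit) j => y j) 1).PosSemidef

/-- The matrix `M₀ = [Fᵀ  I_m  0]`. -/
def Mzero {k m : ℕ} (F : Matrix (Fin k) (Fin m) ℝ) :
    Matrix (Fin m) ((Fin k ⊕ Fin m) ⊕ Unit) ℝ :=
  Matrix.of fun i j =>
    Sum.elim (Sum.elim (fun a => F a i) (fun b => if b = i then (1 : ℝ) else 0))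
      (fun _ => (0 : ℝ)) j

/-- `X` is feasible for the doubly nonnegative (DNN) relaxation with data `(F, w)`. -/
def DNNFeasible {k m : ℕ} (F : Matrix (Fin k) (Fin m) ℝ) (w : Fin m → ℝ)
    (X : Matrix ((Fin k ⊕ Fin m) ⊕ Unit) ((Fin k ⊕ Fin m) ⊕ Unit) ℝ) : Prop :=
  (∀ i j, 0 ≤ X i j) ∧
  X.PosSemidef ∧
  X (Sum.inr ()) (Sum.inr ()) = 1 ∧
  ((Mzero F).mulVec (fun j => X j (Sum.inr ())) = w) ∧
  (∀ i, (Mzero F * X * (Mzero F)ᵀ) i i = w i * w i)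

/-- The objective matrix `Ĥ` of the DNN relaxation. -/
def Hhat {k m : ℕ} (Q : Matrix (Fin k) (Fin k) ℝ) (d : Fin k → ℝ) (v : ℝ) :
    Matrix ((Fin k ⊕ Fin m) ⊕ Unit) ((Fin k ⊕ Fin m) ⊕ Unit) ℝ :=
  fromBlocks (fromBlocks Q 0 0 0)
    (Matrix.of fun i _ => Sum.elim d (fun _ => (0 : ℝ)) i)
    (Matrix.of fun _ j => Sum.elim d (fun _ => (0 : ℝ)) j)
    (Matrix.of fun _ _ => v)

/-- The block matrix `X` built from a Shor-feasible pair `(Y, y)`. -/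
def bigX {k m : ℕ} (F : Matrix (Fin k) (Fin m) ℝ) (w : Fin m → ℝ)
    (Y : Matrix (Fin k) (Fin k) ℝ) (y : Fin k → ℝ) :
    Matrix ((Fin k ⊕ Fin m) ⊕ Unit) ((Fin k ⊕ Fin m) ⊕ Unit) ℝ :=
  fromBlocks
    (fromBlocks Y (vecMulVec y w - Y * F)
      (vecMulVec w y - Fᵀ * Y)
      (Fᵀ * Y * F - vecMulVec (Fᵀ.mulVec y) w - vecMulVec w (Fᵀ.mulVec y)
        + vecMulVec w w))
    (Matrix.of fun i _ => Sum.elim y (fun b => w b - Fᵀ.mulVec y b) i)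
    (Matrix.of fun _ j => Sum.elim y (fun b => w b - Fᵀ.mulVec y b) j)
    (Matrix.of fun _ _ => (1 : ℝ))

def Amat {k m : ℕ} (F : Matrix (Fin k) (Fin m) ℝ) (w : Fin m → ℝ) :
    Matrix ((Fin k ⊕ Fin m) ⊕ Unit) (Fin k ⊕ Unit) ℝ :=
  Matrix.of fun i p =>
    Sum.elim
      (Sum.elim
        (fun a => Sum.elim (fun c => if a = c then (1:ℝ) else 0) (fun _ => 0) p)
        (fun b => Sum.elim (fun c => -F c b) (fun _ => w b) p))
      (fun _ => Sum.elim (fun _ => 0) (fun _ => (1:ℝ)) p) i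

lemma bigX_eq {k m : ℕ} (F : Matrix (Fin k) (Fin m) ℝ) (w : Fin m → ℝ)
    (Y : Matrix (Fin k) (Fin k) ℝ) (y : Fin k → ℝ) :
    bigX F w Y y = Amat F w *
      (fromBlocks Y (Matrix.of fun i (_ : Unit) => y i) (Matrix.of fun (_ : Unit) j => y j) 1)
      * (Amat F w)ᵀ := by
  ext i j
  rcases i with (a|b)|⟨⟩ <;> rcases j with (a'|b')|⟨⟩ <;>
    simp [bigX, Amat, Matrix.mul_apply, Fintype.sum_sum_type, vecMulVec, Matrix.mulVec,
      Matrix.one_apply, Finset.mul_sum, Finset.sum_mul, mul_comm, mul_left_comm, dotProduct,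
      sub_mul, mul_sub, mul_add, add_mul, neg_add, mul_neg, neg_mul, Finset.sum_add_distrib,
      Finset.sum_sub_distrib] <;> ring_nf
  case inl.inr.inl.inr =>
    have e1 : ∑ x, F x b * w b' * y x = ∑ x, w b' * F x b * y x :=
      Finset.sum_congr rfl fun x _ => by ring
    have e2 : ∑ x, F x b' * w b * y x = ∑ x, w b * F x b' * y x :=
      Finset.sum_congr rfl fun x _ => by ring
    rw [e1, e2]

lemma bigX_psd {k m : ℕ} (F : Matrix (Fin k) (Fin m) ℝ) (w : Fin m → ℝ)
    (Y : Matrix (Fin k) (Fin k) ℝ) (y : Fin k → ℝ)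
    (hZ : (fromBlocks Y (Matrix.of fun i (_ : Unit) => y i)
      (Matrix.of fun (_ : Unit) j => y j) 1).PosSemidef) :
    (bigX F w Y y).PosSemidef := by
  rw [bigX_eq F w Y y]
  have h := hZ.mul_mul_conjTranspose_same (Amat F w)
  have he : (Amat F w)ᴴ = (Amat F w)ᵀ := by
    ext i j; simp [Matrix.conjTranspose_apply]
  rwa [he] at h

/-- from a Shor-feasible pair `(Y, y)`, the block matrix `X` is DNN-feasible
and has the same objective value. -/
theorem shor_feasible_to_dnn_feasible {k m : ℕ} (hk : 1 ≤ k) (hm : 1 ≤ m)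
    (F : Matrix (Fin k) (Fin m) ℝ) (w : Fin m → ℝ)
    (Q : Matrix (Fin k) (Fin k) ℝ) (hQ : Q.IsSymm) (d : Fin k → ℝ) (v : ℝ)
    (Y : Matrix (Fin k) (Fin k) ℝ) (hY : Y.IsSymm) (y : Fin k → ℝ)
    (hfeas : ShorFeasible F w Y y) :
    DNNFeasible F w (bigX F w Y y) ∧
    frob (Hhat (m := m) Q d v) (bigX F w Y y) = frob Q Y + 2 * (d ⬝ᵥ y) + v := by
  obtain ⟨h1, h2, h3, h4, h5, h6⟩ := hfeas
  have hYe : ∀ p q, Y p q = Y q p := fun p q => hY.apply q p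
  have hpsd : (bigX F w Y y).PosSemidef := bigX_psd F w Y y h6
  have hXsymm : ∀ p q, bigX F w Y y p q = bigX F w Y y q p := by
    intro p q
    have := congrFun (congrFun hpsd.1 p) q
    simpa [Matrix.conjTranspose_apply] using this.symm
  have hrow : ∀ i, (∑ j, Mzero F i j * bigX F w Y y (Sum.inr ()) j) = w i := by
    intro i
    simp [Mzero, bigX, Fintype.sum_sum_type, Matrix.mulVec, dotProduct, mul_sub,
      Finset.sum_sub_distrib, Finset.sum_ite_eq', mul_comm]
  have hMX : ∀ i j, (Mzero F * bigX F w Y y) i j = w i * bigX F w Y y (Sum.inr ()) j := by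
    intro i j
    rcases j with (a|b)|⟨⟩ <;>
      simp [Mzero, bigX, Matrix.mul_apply, Fintype.sum_sum_type, vecMulVec, Matrix.mulVec,
        Matrix.one_apply, Finset.mul_sum, Finset.sum_mul, mul_comm, mul_left_comm, dotProduct,
        sub_mul, mul_sub, mul_add, add_mul, neg_add, mul_neg, neg_mul, Finset.sum_add_distrib,
        Finset.sum_sub_distrib, Finset.sum_ite_eq'] <;> ring_nf
    case inl.inr =>
      have hc : (∑ x : Fin k, ∑ x1 : Fin k, F x i * F x1 b * Y x x1)
          = ∑ x : Fin k, ∑ x1 : Fin k, F x b * F x1 i * Y x1 x := by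
        rw [Finset.sum_comm]
        exact Finset.sum_congr rfl fun x _ => Finset.sum_congr rfl fun x1 _ => by ring
      rw [hc]; ring
  refine ⟨⟨?_, hpsd, ?_, ?_, ?_⟩, ?_⟩
  · intro i j
    rcases i with (a|b)|⟨⟩ <;> rcases j with (a'|b')|⟨⟩
    · simpa [bigX] using h4 a a'
    · have := h5 b' a
      simp only [bigX, fromBlocks_apply₁₁, fromBlocks_apply₁₂, Matrix.sub_apply,
        vecMulVec_apply, Matrix.mul_apply, Matrix.transpose_apply] at this ⊢
      have hsum : ∑ c, Y a c * F c b' = ∑ c, F c b' * Y c a := by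
        refine Finset.sum_congr rfl fun c _ => by rw [hYe a c]; ring
      rw [hsum]; linarith
    · simpa [bigX] using h2 a
    · simpa [bigX] using h5 b a'
    · have := h3 b b'
      simp only [bigX, Matrix.sub_apply, Matrix.add_apply, vecMulVec_apply,
        fromBlocks_apply₁₁, fromBlocks_apply₂₂] at this ⊢
      linarith
    · simpa [bigX, sub_nonneg] using h1 b
    · simpa [bigX] using h2 a'
    · simpa [bigX, sub_nonneg] using h1 b'
    · simp [bigX]
  · simp [bigX]
  · funext i
    simp [Mzero, bigX, Matrix.mulVec, dotProduct, Fintype.sum_sum_type, mul_sub,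
      Finset.sum_sub_distrib, Finset.sum_ite_eq', mul_comm]
  · intro i
    rw [Matrix.mul_apply]
    simp only [Matrix.transpose_apply]
    calc (∑ j, (Mzero F * bigX F w Y y) i j * Mzero F i j)
        = ∑ j, w i * (bigX F w Y y (Sum.inr ()) j * Mzero F i j) := by
          refine Finset.sum_congr rfl fun j _ => by rw [hMX i j]; ring
      _ = w i * ∑ j, Mzero F i j * bigX F w Y y (Sum.inr ()) j := by
          rw [Finset.mul_sum]; exact Finset.sum_congr rfl fun j _ => by ring
      _ = w i * w i := by rw [hrow i]
  · simp [frob, Matrix.trace, Matrix.mul_apply, Fintype.sum_sum_type, Hhat, bigX,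
      Matrix.diag, dotProduct]
    ring_nf
    rw [Finset.sum_add_distrib]
    ring
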